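/- arXiv:1306.1222 — 5 statements merged into one kernel-verified Lean document; each statement's English description precedes it below -/
import Mathlib

section
/- Let A be a finitely generated additive abelian group and let P be a finitely generated submonoid of A. Then the saturation of P in A, namely P' = {a ∈ A : ∃ n ≥ 1, n • a ∈ P}, is a finitely generated submonoid of A. -/
open Finset

lemma mem_closure_finset_iff {A : Type*} [AddCommMonoid A] (S : Finset A) (x : A) :
    x ∈ AddSubmonoid.closure (S : Set A) ↔ ∃ c : A → ℕ, x = ∑ a ∈ S, c a • a := by
  constructor
  · intro hx
    obtain ⟨l, hl, hsum⟩ := AddSubmonoid.exists_multiset_of_mem_closure hx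
    classical
    refine ⟨fun a => l.count a, ?_⟩
    rw [← hsum]
    exact Finset.sum_multiset_count_of_subset l S
      (fun a ha => hl a (Multiset.mem_toFinset.mp ha))
  · rintro ⟨c, rfl⟩
    exact sum_mem (fun a ha => nsmul_mem (AddSubmonoid.subset_closure ha) _)

lemma int_bound {n : ℕ} (hn : 1 ≤ n) {ι : Type*} (S : Finset ι) (c : ι → ℕ) (v : ι → ℤ)
    (x : ℤ) (hc : ∀ a ∈ S, c a ≤ n) (hx : (n : ℤ) * x = ∑ a ∈ S, (c a : ℤ) * v a) :
    |x| ≤ ∑ a ∈ S, |v a| := by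
  have hn0 : (0 : ℤ) < (n : ℤ) := by exact_mod_cast hn
  have key : (n : ℤ) * |x| ≤ (n : ℤ) * ∑ a ∈ S, |v a| := by
    calc (n : ℤ) * |x| = |(n : ℤ) * x| := by
          rw [abs_mul, abs_of_nonneg hn0.le]
      _ = |∑ a ∈ S, (c a : ℤ) * v a| := by rw [hx]
      _ ≤ ∑ a ∈ S, |(c a : ℤ) * v a| := Finset.abs_sum_le_sum_abs _ _
      _ ≤ ∑ a ∈ S, (n : ℤ) * |v a| := by
          refine Finset.sum_le_sum fun a ha => ?_
          rw [abs_mul, abs_of_nonneg (by positivity)]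
          exact mul_le_mul_of_nonneg_right (by exact_mod_cast hc a ha) (abs_nonneg _)
      _ = (n : ℤ) * ∑ a ∈ S, |v a| := (Finset.mul_sum _ _ _).symm
  exact le_of_mul_le_mul_left key hn0


/-- If `A` is a finitely generated additive abelian group and `P` is a finitely
generated submonoid of `A`, then the saturation
`P' = {a ∈ A : ∃ n ≥ 1, n • a ∈ P}` of `P` in `A` is a finitely generated
submonoid of `A`. -/
theorem saturation_fg (A : Type*) [AddCommGroup A] [AddGroup.FG A]
    (P : AddSubmonoid A) (hP : P.FG) :
    ∃ P' : AddSubmonoid A,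
      (P' : Set A) = {a : A | ∃ n : ℕ, 1 ≤ n ∧ n • a ∈ P} ∧ P'.FG := by
  classical
  obtain ⟨S, hS⟩ := hP
  obtain ⟨d, ι, hι, p, hp, expo, ⟨e⟩⟩ := AddCommGroup.equiv_free_prod_directSum_zmod A
  haveI : ∀ i, NeZero (p i ^ expo i) := fun i => ⟨pow_ne_zero _ (hp i).ne_zero⟩
  haveI hT : Finite (DirectSum ι fun i => ZMod (p i ^ expo i)) :=
    Finite.of_injective (fun (f : DirectSum ι fun i => ZMod (p i ^ expo i)) => (f : ∀ i, ZMod (p i ^ expo i)))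
      DFunLike.coe_injective
  set φ : A →+ (Fin d →₀ ℤ) := (AddMonoidHom.fst _ _).comp e.toAddMonoidHom with hφ
  set Psat : AddSubmonoid A :=
    { carrier := {a : A | ∃ n : ℕ, 1 ≤ n ∧ n • a ∈ P}
      zero_mem' := ⟨1, le_refl 1, by simpa using P.zero_mem⟩
      add_mem' := by
        rintro x y ⟨n, hn, hx⟩ ⟨m, hm, hy⟩
        refine ⟨n * m, Nat.one_le_iff_ne_zero.mpr (Nat.mul_ne_zero
          (Nat.one_le_iff_ne_zero.mp hn) (Nat.one_le_iff_ne_zero.mp hm)), ?_⟩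
        rw [smul_add]
        refine add_mem ?_ ?_
        · rw [mul_comm, mul_smul]; exact nsmul_mem hx m
        · rw [mul_smul]; exact nsmul_mem hy n } with hPsat
  set B : Set A :=
    {b | ∃ n : ℕ, 1 ≤ n ∧ ∃ c : A → ℕ, (∀ a ∈ S, c a ≤ n) ∧ n • b = ∑ a ∈ S, c a • a}
    with hB
  have hBfin : B.Finite := by
    set M : Fin d → ℤ := fun j => ∑ a ∈ S, |φ a j| with hM
    have hbox : {f : Fin d →₀ ℤ | ∀ j, |f j| ≤ M j}.Finite := by
      have h1 : (Set.pi Set.univ fun j : Fin d => Set.Icc (-(M j)) (M j)).Finite :=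
        Set.Finite.pi fun j => Set.finite_Icc _ _
      refine Set.Finite.of_finite_image (f := fun f : Fin d →₀ ℤ => (f : Fin d → ℤ))
        (h1.subset ?_) DFunLike.coe_injective.injOn
      rintro _ ⟨f, hf, rfl⟩
      exact fun j _ => Set.mem_Icc.mpr (abs_le.mp (hf j))
    have himg : (⇑φ '' B).Finite := by
      refine hbox.subset ?_
      rintro _ ⟨b, ⟨n, hn, c, hc, hb⟩, rfl⟩ j
      have hψ : (n : ℤ) * (φ b j) = ∑ a ∈ S, (c a : ℤ) * (φ a j) := by
        have h := congrArg (⇑((Finsupp.applyAddHom j).comp φ)) hb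
        simpa [map_nsmul, map_sum, nsmul_eq_mul] using h
      exact int_bound hn S c (fun a => φ a j) _ hc hψ
    have heB : (⇑e '' B).Finite := by
      refine (himg.prod (Set.finite_univ
        (α := DirectSum ι fun i => ZMod (p i ^ expo i)))).subset ?_
      rintro _ ⟨b, hb, rfl⟩
      exact ⟨⟨b, hb, rfl⟩, trivial⟩
    exact Set.Finite.of_finite_image heB e.injective.injOn
  refine ⟨Psat, rfl, ⟨S ∪ hBfin.toFinset, ?_⟩⟩
  apply le_antisymm
  · rw [AddSubmonoid.closure_le]
    intro x hx
    rw [Finset.coe_union, Set.mem_union] at hx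
    rcases hx with hx | hx
    · exact ⟨1, le_refl 1, by simpa using (hS ▸ AddSubmonoid.subset_closure hx : x ∈ P)⟩
    · obtain ⟨n, hn, c, hc, hb⟩ := hBfin.mem_toFinset.mp hx
      exact ⟨n, hn, hb ▸ hS ▸ (mem_closure_finset_iff S _).mpr ⟨c, rfl⟩⟩
  · intro x hx
    obtain ⟨n, hn, hxP⟩ := hx
    rw [← hS] at hxP
    obtain ⟨c, hc⟩ := (mem_closure_finset_iff S _).mp hxP
    set pp : A := ∑ a ∈ S, (c a / n) • a with hpp
    have hppmem : pp ∈ AddSubmonoid.closure (↑(S ∪ hBfin.toFinset) : Set A) := by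
      refine sum_mem fun a ha => nsmul_mem (AddSubmonoid.subset_closure ?_) _
      rw [Finset.coe_union, Set.mem_union]
      exact Or.inl ha
    have hnb : n • (x - pp) = ∑ a ∈ S, (c a % n) • a := by
      have h1 : n • pp = ∑ a ∈ S, (n * (c a / n)) • a := by
        rw [hpp, Finset.smul_sum]
        exact Finset.sum_congr rfl fun a _ => (mul_smul n (c a / n) a).symm
      have h2 : (∑ a ∈ S, c a • a) = n • pp + ∑ a ∈ S, (c a % n) • a := by
        rw [h1, ← Finset.sum_add_distrib]
        exact Finset.sum_congr rfl fun a _ => by rw [← add_smul, Nat.div_add_mod]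
      rw [smul_sub, hc, h2]
      abel
    have hxB : x - pp ∈ B :=
      ⟨n, hn, fun a => c a % n,
        fun a _ => le_of_lt (Nat.mod_lt _ (Nat.lt_of_lt_of_le Nat.zero_lt_one hn)), hnb⟩
    have hxeq : x = pp + (x - pp) := by abel
    rw [hxeq]
    refine add_mem hppmem (AddSubmonoid.subset_closure ?_)
    rw [Finset.coe_union, Set.mem_union]
    exact Or.inr (hBfin.mem_toFinset.mpr hxB)
end

section
/- Let A be an additive abelian group, P a submonoid of A, and ι : A → ℚ ⊗[ℤ] A the canonical map a ↦ 1 ⊗ a into the rationalization of A. For an element a ∈ A, there exists n ≥ 1 with n • a ∈ P if and only if ι(a) lies in the cone spanned by ι(P), i.e. in the submodule of ℚ ⊗[ℤ] A over the semiring of nonnegative rationals generated by the image ι(P) (equivalently, ι(a) is a finite linear combination of elements of ι(P) with nonnegative rational coefficients). -/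
section Aux
open TensorProduct

noncomputable def iotaA (A : Type*) [AddCommGroup A] : A →ₗ[ℤ] ℚ ⊗[ℤ] A :=
  TensorProduct.mk ℤ ℚ A 1

instance (A : Type*) [AddCommGroup A] : IsLocalizedModule (nonZeroDivisors ℤ) (iotaA A) :=
  (isLocalizedModule_iff_isBaseChange (nonZeroDivisors ℤ) ℚ _).mpr
    (TensorProduct.isBaseChange ℤ A ℚ)

theorem iotaA_eq_zero {A : Type*} [AddCommGroup A] {a : A} (h : (1:ℚ) ⊗ₜ[ℤ] a = 0) :
    ∃ n : ℕ, 1 ≤ n ∧ n • a = 0 := by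
  obtain ⟨s, hs⟩ := (IsLocalizedModule.eq_zero_iff (nonZeroDivisors ℤ) (iotaA A)).mp h
  have hs' : (s : ℤ) • a = 0 := hs
  refine ⟨(s : ℤ).natAbs, ?_, ?_⟩
  · have := nonZeroDivisors.coe_ne_zero s
    omega
  · rcases Int.natAbs_eq (s : ℤ) with h' | h'
    · rw [← natCast_zsmul, ← h', hs']
    · rw [← natCast_zsmul, show ((s:ℤ).natAbs : ℤ) = -(s:ℤ) by omega, neg_zsmul, hs', neg_zero]

theorem nsmul_tmul {A : Type*} [AddCommGroup A] (n : ℕ) (a : A) :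
    (1:ℚ) ⊗ₜ[ℤ] (n • a) = (n : ℚ) • ((1:ℚ) ⊗ₜ[ℤ] a) := by
  rw [show (1:ℚ) ⊗ₜ[ℤ] (n • a) = iotaA A (n • a) from rfl, map_nsmul,
    ← Nat.cast_smul_eq_nsmul ℚ]
  rfl

end Aux

open TensorProduct in
/-- Let `P` be a submonoid of an additive abelian group `A` and
`ι : A → ℚ ⊗[ℤ] A`, `ι a = 1 ⊗ a`.  An element `a ∈ A` satisfies `n • a ∈ P`
for some `n ≥ 1` if and only if `ι a` lies in the cone spanned by `ι '' P`,
i.e. the `ℚ≥0`-submodule of `ℚ ⊗[ℤ] A` generated by the image of `P`. -/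
theorem mem_saturation_iff_mem_rat_cone (A : Type*) [AddCommGroup A]
    (P : AddSubmonoid A) (a : A) :
    (∃ n : ℕ, 1 ≤ n ∧ n • a ∈ P) ↔
      (1 : ℚ) ⊗ₜ[ℤ] a ∈
        Submodule.span ℚ≥0 ((fun x : A => (1 : ℚ) ⊗ₜ[ℤ] x) '' (P : Set A)) := by
  constructor
  · rintro ⟨n, hn, hmem⟩
    have h1 : (1:ℚ) ⊗ₜ[ℤ] (n • a) ∈
        Submodule.span ℚ≥0 ((fun x : A => (1 : ℚ) ⊗ₜ[ℤ] x) '' (P : Set A)) :=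
      Submodule.subset_span ⟨n • a, hmem, rfl⟩
    have h2 := Submodule.smul_mem _ ((n : ℚ≥0)⁻¹) h1
    rw [nsmul_tmul] at h2
    rw [show ((n:ℚ≥0)⁻¹ • ((n:ℚ) • (1:ℚ) ⊗ₜ[ℤ] a) : ℚ ⊗[ℤ] A)
        = (((n:ℚ≥0)⁻¹ : ℚ≥0) : ℚ) • ((n:ℚ) • (1:ℚ) ⊗ₜ[ℤ] a) from rfl] at h2
    rwa [NNRat.cast_inv, NNRat.cast_natCast,
      inv_smul_smul₀ (by exact_mod_cast by omega : (n:ℚ) ≠ 0)] at h2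
  · intro h
    -- every element of the span satisfies: ∃ N ≥ 1, ∃ p ∈ P, N • x = ι p
    have key : ∀ x ∈ Submodule.span ℚ≥0 ((fun x : A => (1 : ℚ) ⊗ₜ[ℤ] x) '' (P : Set A)),
        ∃ N : ℕ, 1 ≤ N ∧ ∃ p ∈ P, (N : ℚ) • x = (1:ℚ) ⊗ₜ[ℤ] p := by
      intro x hx
      induction hx using Submodule.span_induction with
      | mem x hx =>
        obtain ⟨p, hp, rfl⟩ := hx
        exact ⟨1, le_refl 1, p, hp, by rw [Nat.cast_one, one_smul]⟩
      | zero => exact ⟨1, le_refl 1, 0, P.zero_mem, by simp [tmul_zero]⟩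
      | add x y hx hy ihx ihy =>
        obtain ⟨N, hN, p, hp, hNp⟩ := ihx
        obtain ⟨M, hM, q, hq, hMq⟩ := ihy
        refine ⟨N * M, Nat.one_le_iff_ne_zero.mpr (by positivity), M • p + N • q,
          P.add_mem (P.nsmul_mem hp M) (P.nsmul_mem hq N), ?_⟩
        have : ((N * M : ℕ) : ℚ) • (x + y)
            = (M:ℚ) • ((N:ℚ) • x) + (N:ℚ) • ((M:ℚ) • y) := by
          push_cast
          rw [smul_add, smul_smul, smul_smul, mul_comm (M:ℚ)]
        rw [this, hNp, hMq, ← nsmul_tmul, ← nsmul_tmul, ← tmul_add]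
      | smul q x hx ihx =>
        obtain ⟨N, hN, p, hp, hNp⟩ := ihx
        refine ⟨q.den * N, Nat.one_le_iff_ne_zero.mpr (by positivity),
          q.num • p, P.nsmul_mem hp _, ?_⟩
        have : ((q.den * N : ℕ) : ℚ) • q • x = (q.num : ℚ) • ((N:ℚ) • x) := by
          rw [show (q • x : ℚ ⊗[ℤ] A) = ((q:ℚ) • x : ℚ ⊗[ℤ] A) from rfl]
          push_cast
          rw [smul_smul, smul_smul]
          have hd : (q.den : ℚ) * (q : ℚ) = (q.num : ℚ) := by
            have := congrArg (NNRat.cast : ℚ≥0 → ℚ) q.den_mul_eq_num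
            push_cast at this
            exact this
          rw [mul_right_comm, hd]
        rw [this, hNp, ← nsmul_tmul]
    obtain ⟨N, hN, p, hp, hNp⟩ := key _ h
    rw [← nsmul_tmul] at hNp
    have : (1:ℚ) ⊗ₜ[ℤ] (N • a - p) = 0 := by
      rw [show (1:ℚ) ⊗ₜ[ℤ] (N • a - p) = iotaA A (N • a - p) from rfl, map_sub, sub_eq_zero]
      exact hNp
    obtain ⟨m, hm, hma⟩ := iotaA_eq_zero this
    refine ⟨m * N, Nat.one_le_iff_ne_zero.mpr (by positivity), ?_⟩
    have : (m * N) • a = m • p + m • (N • a - p) := by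
      rw [smul_sub, mul_smul]; abel
    rw [this, hma, add_zero]
    exact P.nsmul_mem hp m
end

section
/- Let A be a finitely generated additive abelian group, let ι : A → ℝ ⊗[ℤ] A be the canonical map a ↦ 1 ⊗ a, and let s be a finite subset of A. Then the set {a ∈ A : ι(a) ∈ convexHull ℝ (ι '' s)} is finite, where convexHull ℝ denotes the convex hull in the real vector space ℝ ⊗[ℤ] A. -/
open TensorProduct in
/-- Let `A` be a finitely generated additive abelian group,
`ι : A → ℝ ⊗[ℤ] A`, `ι a = 1 ⊗ a`, and `s` a finite subset of `A`.  Then the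
set of elements of `A` whose image under `ι` lies in the convex hull of
`ι '' s` is finite. -/
theorem finite_preimage_convexHull (A : Type*) [AddCommGroup A] [AddGroup.FG A]
    (s : Finset A) :
    {a : A | (1 : ℝ) ⊗ₜ[ℤ] a ∈
      convexHull ℝ ((fun x : A => (1 : ℝ) ⊗ₜ[ℤ] x) '' (s : Set A))}.Finite := by
  obtain ⟨n, ι, fι, p, hp, e, ⟨g⟩⟩ := AddCommGroup.equiv_free_prod_directSum_zmod A
  -- the ℤ-linear map A → (Fin n → ℝ) picking the free coordinates
  have : ∀ i, NeZero (p i ^ e i) := fun i => ⟨pow_ne_zero _ (hp i).ne_zero⟩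
  set qh : A →+ (Fin n → ℝ) :=
    { toFun := fun a i => ((g a).1 i : ℝ)
      map_zero' := by funext i; simp
      map_add' := by intro a b; funext i; simp }
  set q : A →ₗ[ℤ] (Fin n → ℝ) := qh.toIntLinearMap with hq
  set L : ℝ ⊗[ℤ] A →ₗ[ℝ] (Fin n → ℝ) := q.liftBaseChange ℝ with hL
  have hLι : ∀ a : A, L ((1 : ℝ) ⊗ₜ[ℤ] a) = q a := fun a => by
    simp [hL, LinearMap.liftBaseChange_tmul]
  -- the convex hull in ℝ^n
  have hcomp : IsCompact (convexHull ℝ (q '' (s : Set A))) :=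
    (s.finite_toSet.image q).isCompact_convexHull (𝕜 := ℝ)
  obtain ⟨R, hR⟩ := hcomp.isBounded.exists_norm_le
  -- membership implies bounded coordinates
  have key : ∀ a ∈ {a : A | (1 : ℝ) ⊗ₜ[ℤ] a ∈
      convexHull ℝ ((fun x : A => (1 : ℝ) ⊗ₜ[ℤ] x) '' (s : Set A))},
      ∀ i, |((g a).1 i : ℝ)| ≤ R := by
    intro a ha i
    have h1 : L ((1 : ℝ) ⊗ₜ[ℤ] a) ∈ L '' (convexHull ℝ
        ((fun x : A => (1 : ℝ) ⊗ₜ[ℤ] x) '' (s : Set A))) := Set.mem_image_of_mem _ ha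
    rw [L.image_convexHull, Set.image_image] at h1
    have h2 : (fun x : A => L ((1 : ℝ) ⊗ₜ[ℤ] x)) = ⇑q := funext hLι
    rw [h2, hLι] at h1
    have h3 : ‖q a‖ ≤ R := hR _ h1
    calc |((g a).1 i : ℝ)| = ‖q a i‖ := rfl
      _ ≤ ‖q a‖ := norm_le_pi_norm (q a) i
      _ ≤ R := h3
  -- finiteness
  set V : Set (Fin n →₀ ℤ) := {v | ∀ i, |(v i : ℝ)| ≤ R} with hV
  have hVfin : V.Finite := by
    have hinj : Set.InjOn (fun v : Fin n →₀ ℤ => (v : Fin n → ℤ)) V :=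
      fun v _ w _ h => DFunLike.coe_injective h
    apply Set.Finite.of_finite_image _ hinj
    apply Set.Finite.subset (Set.Finite.pi (fun i : Fin n => Set.finite_Icc (-⌈R⌉) ⌈R⌉))
    rintro _ ⟨v, hv, rfl⟩ i _
    have := hv i
    constructor
    · have : -(⌈R⌉ : ℝ) ≤ (v i : ℝ) := by
        have := abs_le.mp (hv i)
        linarith [Int.le_ceil R]
      exact_mod_cast this
    · have : (v i : ℝ) ≤ (⌈R⌉ : ℝ) := by
        have := abs_le.mp (hv i)
        linarith [Int.le_ceil R]
      exact_mod_cast this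
  haveI := fι
  haveI := Classical.decEq ι
  haveI : ∀ i, Fintype (ZMod (p i ^ e i)) := fun i => ZMod.fintype _
  haveI : Fintype (DirectSum ι fun i => ZMod (p i ^ e i)) := DFinsupp.fintype
  have hfin : (V ×ˢ (Set.univ : Set (DirectSum ι fun i => ZMod (p i ^ e i)))).Finite :=
    hVfin.prod Set.finite_univ
  apply Set.Finite.of_finite_image _ (g.injective.injOn)
  apply hfin.subset
  rintro _ ⟨a, ha, rfl⟩
  refine ⟨?_, trivial⟩
  intro i
  exact key a ha i
end

section
/- Let G and H be additive abelian groups, let P be a submonoid of G that generates G as a group, and let Q be a submonoid of H that generates H as a group and is saturated in H. Let P' = {g ∈ G : ∃ n ≥ 1, n • g ∈ P} be the saturation of P in G. Then every additive monoid homomorphism f : P → Q extends uniquely along the inclusion P ⊆ P' to an additive monoid homomorphism P' → Q; that is, there exists a unique additive monoid homomorphism g : P' → Q whose restriction to P equals f. -/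
/-- The saturation `{a ∈ A : ∃ n ≥ 1, n • a ∈ P}` of a submonoid `P` of an
additive abelian group `A`, as a submonoid of `A`. -/
def AddSubmonoid.nsmulSaturation {A : Type*} [AddCommGroup A] (P : AddSubmonoid A) :
    AddSubmonoid A where
  carrier := {a : A | ∃ n : ℕ, 1 ≤ n ∧ n • a ∈ P}
  zero_mem' := ⟨1, le_refl 1, by simpa using P.zero_mem⟩
  add_mem' := by
    rintro a b ⟨n, hn, ha⟩ ⟨m, hm, hb⟩
    refine ⟨n * m, Nat.one_le_iff_ne_zero.mpr (by positivity), ?_⟩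
    have h1 : (n * m) • a = m • (n • a) := by rw [mul_comm, mul_smul]
    have h2 : (n * m) • b = n • (m • b) := by rw [mul_smul]
    rw [smul_add, h1, h2]
    exact P.add_mem (P.nsmul_mem ha m) (P.nsmul_mem hb n)

/-- `P` is contained in its saturation. -/
theorem AddSubmonoid.le_saturation {A : Type*} [AddCommGroup A]
    (P : AddSubmonoid A) : P ≤ P.nsmulSaturation :=
  fun a ha => ⟨1, le_refl 1, by simpa using ha⟩

/-- Let `P` be a submonoid of an additive abelian group `G` generating `G` as a
group, and let `Q` be a submonoid of an additive abelian group `H` generating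
`H` as a group and saturated in `H`.  Then every additive monoid homomorphism
`f : P → Q` extends uniquely along the inclusion `P ⊆ P'` of `P` into its
saturation to an additive monoid homomorphism `P' → Q`. -/
theorem saturation_hom_extension
    {G H : Type*} [AddCommGroup G] [AddCommGroup H]
    (P : AddSubmonoid G) (hPgen : ∀ g : G, ∃ p ∈ P, ∃ q ∈ P, g = p - q)
    (Q : AddSubmonoid H) (hQgen : ∀ h : H, ∃ p ∈ Q, ∃ q ∈ Q, h = p - q)
    (hQsat : Q.nsmulSaturation = Q) (f : P →+ Q) :
    ∃! g : P.nsmulSaturation →+ Q,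
      g.comp (AddSubmonoid.inclusion P.le_saturation) = f := by
  classical
  -- well-definedness of `f p - f q` for a decomposition `p - q`
  have wd : ∀ (p q p' q' : G) (hp : p ∈ P) (hq : q ∈ P) (hp' : p' ∈ P) (hq' : q' ∈ P),
      p - q = p' - q' →
      ((f ⟨p, hp⟩ : H) - (f ⟨q, hq⟩ : H)) = (f ⟨p', hp'⟩ : H) - (f ⟨q', hq'⟩ : H) := by
    intro p q p' q' hp hq hp' hq' h
    have h2 : p + q' = p' + q := sub_eq_sub_iff_add_eq_add.mp h
    have h3 : (⟨p, hp⟩ + ⟨q', hq'⟩ : P) = ⟨p', hp'⟩ + ⟨q, hq⟩ := Subtype.ext h2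
    have h4 : (f ⟨p, hp⟩ : H) + (f ⟨q', hq'⟩ : H) = (f ⟨p', hp'⟩ : H) + (f ⟨q, hq⟩ : H) := by
      have := congrArg f h3
      rw [map_add, map_add] at this
      exact_mod_cast congrArg (Subtype.val) this
    exact sub_eq_sub_iff_add_eq_add.mpr h4
  choose p hp q hq hpq using hPgen
  set Ffun : G → H := fun a => (f ⟨p a, hp a⟩ : H) - (f ⟨q a, hq a⟩ : H) with hF
  have Fadd : ∀ a b : G, Ffun (a + b) = Ffun a + Ffun b := by
    intro a b
    have e : a + b = (p a - q a) + (p b - q b) := by rw [← hpq a, ← hpq b]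
    have hdec : p (a + b) - q (a + b) = (p a + p b) - (q a + q b) := by
      rw [← hpq (a + b), e]; abel
    have := wd (p (a+b)) (q (a+b)) (p a + p b) (q a + q b)
      (hp _) (hq _) (P.add_mem (hp a) (hp b)) (P.add_mem (hq a) (hq b)) hdec
    have hsum : (⟨p a + p b, P.add_mem (hp a) (hp b)⟩ : P) = ⟨p a, hp a⟩ + ⟨p b, hp b⟩ := rfl
    have hsum' : (⟨q a + q b, P.add_mem (hq a) (hq b)⟩ : P) = ⟨q a, hq a⟩ + ⟨q b, hq b⟩ := rfl
    rw [hsum, hsum', map_add, map_add] at this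
    simp only [hF]
    rw [this]
    push_cast
    abel
  let F : G →+ H := AddMonoidHom.mk' Ffun Fadd
  have Fspec : ∀ (x : G) (hx : x ∈ P), F x = (f ⟨x, hx⟩ : H) := by
    intro x hx
    have hdec : p x - q x = x - 0 := by rw [← hpq x, sub_zero]
    have := wd (p x) (q x) x 0 (hp x) (hq x) hx P.zero_mem hdec
    have h0 : (⟨(0 : G), P.zero_mem⟩ : P) = 0 := rfl
    rw [h0, map_zero] at this
    show (f ⟨p x, hp x⟩ : H) - (f ⟨q x, hq x⟩ : H) = _
    simpa using this
  have Fmem : ∀ a ∈ P.nsmulSaturation, F a ∈ Q := by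
    rintro a ⟨n, hn, hna⟩
    have : n • F a = F (n • a) := (map_nsmul F n a).symm
    rw [Fspec (n • a) hna] at this
    have hsat : F a ∈ Q.nsmulSaturation := ⟨n, hn, this ▸ (f ⟨n • a, hna⟩).2⟩
    rwa [hQsat] at hsat
  refine ⟨AddMonoidHom.codRestrict (F.comp P.nsmulSaturation.subtype) Q
      (fun x => Fmem x x.2), ?_, ?_⟩
  · ext x
    show F ((x : G)) = (f x : H)
    exact Fspec (x : G) x.2
  · intro g hg
    ext a
    -- a = p - q with p, q ∈ P
    obtain ⟨pa, hpa, qa, hqa, hdec⟩ : ∃ pa ∈ P, ∃ qa ∈ P, (a : G) = pa - qa :=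
      ⟨p (a : G), hp _, q (a : G), hq _, hpq _⟩
    have key : a + AddSubmonoid.inclusion P.le_saturation ⟨qa, hqa⟩
        = AddSubmonoid.inclusion P.le_saturation ⟨pa, hpa⟩ := by
      apply Subtype.ext
      show (a : G) + qa = pa
      rw [hdec]; abel
    have hga : (g a : H) + (f ⟨qa, hqa⟩ : H) = (f ⟨pa, hpa⟩ : H) := by
      have := congrArg g key
      rw [map_add] at this
      have h1 : g (AddSubmonoid.inclusion P.le_saturation ⟨qa, hqa⟩) = f ⟨qa, hqa⟩ := by
        rw [← hg]; rfl
      have h2 : g (AddSubmonoid.inclusion P.le_saturation ⟨pa, hpa⟩) = f ⟨pa, hpa⟩ := by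
        rw [← hg]; rfl
      rw [h1, h2] at this
      exact_mod_cast congrArg Subtype.val this
    show (g a : H) = F (a : G)
    have hFa : F (a : G) + (f ⟨qa, hqa⟩ : H) = (f ⟨pa, hpa⟩ : H) := by
      have : F (a : G) + F qa = F pa := by
        rw [← map_add]
        congr 1
        rw [hdec]; abel
      rwa [Fspec qa hqa, Fspec pa hpa] at this
    have := hga.trans hFa.symm
    exact add_right_cancel this
end

section
/- Let L be a finitely generated free additive abelian group and let P be a finitely generated submonoid of L such that: P generates L as a group; P is sharp, i.e. if p ∈ P and −p ∈ P then p = 0; and P is saturated in L, i.e. every a ∈ L with n • a ∈ P for some n ≥ 1 lies in P. Then the evaluation map e : P → Hom(Hom(P, ℕ), ℕ), defined by e(p)(φ) = φ(p), where Hom denotes additive monoid homomorphisms and ℕ is the additive monoid of natural numbers, is a bijective monoid homomorphism (an isomorphism of commutative monoids). -/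
section Farkas

variable {V : Type*} [AddCommGroup V] [Module ℚ V]

/-- Membership in the convex cone generated by a list of vectors (over `ℚ`). -/
def InCone : List V → V → Prop
  | [], a => a = 0
  | v :: l, a => ∃ t : ℚ, 0 ≤ t ∧ InCone l (a - t • v)

lemma inCone_nil {a : V} : InCone [] a ↔ a = 0 := Iff.rfl

lemma inCone_cons {v : V} {l : List V} {a : V} :
    InCone (v :: l) a ↔ ∃ t : ℚ, 0 ≤ t ∧ InCone l (a - t • v) := Iff.rfl

lemma InCone.cons_self {v : V} {l : List V} {a : V} (h : InCone l a) : InCone (v :: l) a :=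
  ⟨0, le_refl 0, by simpa using h⟩

lemma InCone.smul {l : List V} {a : V} (h : InCone l a) {c : ℚ} (hc : 0 ≤ c) :
    InCone l (c • a) := by
  induction l generalizing a with
  | nil => rw [inCone_nil] at h ⊢; simp [h]
  | cons v l ih =>
    obtain ⟨t, ht, h⟩ := h
    exact ⟨c * t, mul_nonneg hc ht, by
      have : c • a - (c * t) • v = c • (a - t • v) := by rw [smul_sub, mul_smul]
      rw [this]; exact ih h⟩

lemma farkas_back (f : Module.Dual ℚ V) (v : V) (hv : f v < 0) :
    ∀ (l : List V), (∀ w ∈ l, 0 ≤ f w) → ∀ a : V, f a ≤ 0 →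
      InCone (l.map (fun w => w - (f w / f v) • v)) (a - (f a / f v) • v) →
      InCone (v :: l) a := by
  intro l
  induction l with
  | nil =>
    intro _ a ha h
    rw [List.map_nil, inCone_nil, sub_eq_zero] at h
    exact ⟨f a / f v, by rw [div_nonneg_iff]; exact Or.inr ⟨ha, hv.le⟩, by
      rw [inCone_nil, sub_eq_zero]; exact h⟩
  | cons w l ih =>
    intro hfl a ha h
    rw [List.map_cons, inCone_cons] at h
    obtain ⟨t, ht, h⟩ := h
    have hfw : 0 ≤ f w := hfl w List.mem_cons_self
    have key : a - (f a / f v) • v - t • (w - (f w / f v) • v)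
        = (a - t • w) - (f (a - t • w) / f v) • v := by
      have hv0 : f v ≠ 0 := hv.ne
      rw [map_sub, map_smul, smul_eq_mul]
      match_scalars
      all_goals field_simp
      all_goals ring
    rw [key] at h
    have ha' : f (a - t • w) ≤ 0 := by
      rw [map_sub, map_smul, smul_eq_mul]
      nlinarith
    have h2 := ih (fun x hx => hfl x (List.mem_cons_of_mem w hx)) (a - t • w) ha' h
    obtain ⟨s, hs, h3⟩ := h2
    refine ⟨s, hs, t, ht, ?_⟩
    have e : a - s • v - t • w = a - t • w - s • v := by abel
    rw [e]
    exact h3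

theorem farkas_aux (n : ℕ) : ∀ l : List V, l.length = n → ∀ a : V,
    InCone l a ∨ ∃ f : Module.Dual ℚ V, (∀ w ∈ l, 0 ≤ f w) ∧ f a < 0 := by
  induction n with
  | zero =>
    intro l hl a
    rw [List.length_eq_zero_iff] at hl
    subst hl
    by_cases ha : a = 0
    · exact Or.inl ha
    · right
      obtain ⟨f, hf⟩ := not_forall.mp ((Module.forall_dual_apply_eq_zero_iff ℚ a).not.mpr ha)
      rcases lt_or_gt_of_ne hf with h | h
      · exact ⟨f, by simp, h⟩
      · exact ⟨-f, by simp, by simpa using h⟩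
  | succ n ih =>
    intro l hl a
    obtain ⟨v, l', rfl⟩ : ∃ v l', l = v :: l' := by
      cases l with
      | nil => simp at hl
      | cons v l' => exact ⟨v, l', rfl⟩
    have hl' : l'.length = n := by simpa using hl
    rcases ih l' hl' a with h | ⟨f, hf, hfa⟩
    · exact Or.inl h.cons_self
    by_cases hfv : 0 ≤ f v
    · exact Or.inr ⟨f, fun w hw => by
        rcases List.mem_cons.mp hw with h | hw
        · rw [h]; exact hfv
        · exact hf w hw, hfa⟩
    push_neg at hfv
    rcases ih (l'.map (fun w => w - (f w / f v) • v)) (by simpa using hl')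
        (a - (f a / f v) • v) with h | ⟨g, hg, hga⟩
    · exact Or.inl (farkas_back f v hfv l' hf a hfa.le h)
    · right
      refine ⟨g - (g v / f v) • f, fun w hw => ?_, ?_⟩
      · rcases List.mem_cons.mp hw with h | hw
        · rw [h]
          simp only [LinearMap.sub_apply, LinearMap.smul_apply, smul_eq_mul]
          have : g v / f v * f v = g v := div_mul_cancel₀ _ hfv.ne
          rw [this]; simp
        · have := hg _ (List.mem_map_of_mem hw)
          simp only [map_sub, map_smul, smul_eq_mul] at this
          simp only [LinearMap.sub_apply, LinearMap.smul_apply, smul_eq_mul]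
          have e : g w - g v / f v * f w = g w - f w / f v * g v := by ring
          rw [e]; linarith [this]
      · have := hga
        simp only [map_sub, map_smul, smul_eq_mul] at this
        simp only [LinearMap.sub_apply, LinearMap.smul_apply, smul_eq_mul]
        have e : g a - g v / f v * f a = g a - f a / f v * g v := by ring
        rw [e]; exact this

theorem farkas (l : List V) (a : V) :
    InCone l a ∨ ∃ f : Module.Dual ℚ V, (∀ w ∈ l, 0 ≤ f w) ∧ f a < 0 :=
  farkas_aux l.length l rfl a

lemma inCone_clear {L : Type*} [AddCommGroup L] (eQ : L →+ V) (hinj : Function.Injective eQ) :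
    ∀ (ls : List L) (a : L), InCone (ls.map eQ) (eQ a) →
      ∃ n : ℕ, 1 ≤ n ∧ n • a ∈ AddSubmonoid.closure {x | x ∈ ls} := by
  intro ls
  induction ls with
  | nil =>
    intro a h
    rw [List.map_nil, inCone_nil] at h
    have : a = 0 := hinj (by simpa using h)
    exact ⟨1, le_refl 1, by simp [this, AddSubmonoid.zero_mem]⟩
  | cons s ls ih =>
    intro a h
    rw [List.map_cons, inCone_cons] at h
    obtain ⟨t, ht, h⟩ := h
    set p : ℕ := t.num.toNat with hp
    set q : ℕ := t.den with hq
    have hq1 : 1 ≤ q := t.pos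
    have htq : (q : ℚ) * t = (p : ℚ) := by
      have hnum : ((p : ℤ) : ℚ) = (t.num : ℚ) := by
        rw [hp]; exact_mod_cast congrArg (Int.cast : ℤ → ℚ) (Int.toNat_of_nonneg (Rat.num_nonneg.mpr ht))
      rw [mul_comm]
      rw [show ((q : ℚ)) = ((t.den : ℚ)) from rfl]
      rw [Rat.mul_den_eq_num]
      exact_mod_cast hnum.symm
    have h2 := h.smul (show (0:ℚ) ≤ (q : ℚ) by positivity)
    have key : (q : ℚ) • (eQ a - t • eQ s) = eQ (q • a - p • s) := by
      rw [smul_sub, smul_smul, htq, map_sub, map_nsmul, map_nsmul,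
        Nat.cast_smul_eq_nsmul ℚ q (eQ a), Nat.cast_smul_eq_nsmul ℚ p (eQ s)]
    rw [key] at h2
    obtain ⟨n, hn, hmem⟩ := ih (q • a - p • s) h2
    refine ⟨n * q, Nat.one_le_iff_ne_zero.mpr (by positivity), ?_⟩
    have hsum : (n * q) • a = n • (q • a - p • s) + (n * p) • s := by
      rw [smul_sub, mul_smul, mul_smul]
      abel
    rw [hsum]
    have hsub : AddSubmonoid.closure {x | x ∈ ls} ≤ AddSubmonoid.closure {x | x ∈ s :: ls} := by
      apply AddSubmonoid.closure_mono
      intro x hx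
      exact List.mem_cons_of_mem s hx
    apply AddSubmonoid.add_mem
    · exact hsub hmem
    · apply AddSubmonoid.nsmul_mem
      exact AddSubmonoid.subset_closure (show s ∈ {x | x ∈ s :: ls} from List.mem_cons_self)

end Farkas

section Aux

lemma exists_extension {G H : Type*} [AddCommGroup G] [AddCommGroup H] (D : AddSubmonoid G)
    (hg : ∀ g : G, ∃ p ∈ D, ∃ q ∈ D, g = p - q) (ψ : D →+ H) :
    ∃ Ψ : G →+ H, ∀ d : D, Ψ d = ψ d := by
  choose p hp q hq hpq using hg
  have key : ∀ a b c d : D, (a : G) - b = (c : G) - d → ψ a - ψ b = ψ c - ψ d := by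
    intro a b c d h
    rw [sub_eq_sub_iff_add_eq_add] at h ⊢
    have h3 : a + d = c + b := Subtype.ext (by exact_mod_cast h)
    rw [← map_add, ← map_add, h3]
  refine ⟨AddMonoidHom.mk' (fun g => ψ ⟨p g, hp g⟩ - ψ ⟨q g, hq g⟩) ?_, ?_⟩
  · intro a b
    have step : ψ (⟨p (a+b), hp _⟩ : D) - ψ (⟨q (a+b), hq _⟩ : D)
        = ψ ((⟨p a, hp a⟩ + ⟨p b, hp b⟩ : D)) - ψ ((⟨q a, hq a⟩ + ⟨q b, hq b⟩ : D)) := by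
      apply key
      push_cast
      have e : a + b = (p a - q a) + (p b - q b) := by rw [← hpq a, ← hpq b]
      rw [← hpq (a + b), e]
      abel
    simp only [step, map_add]
    abel
  · intro d
    have step : ψ (⟨p d, hp _⟩ : D) - ψ (⟨q d, hq _⟩ : D) = ψ d - ψ 0 := by
      apply key
      push_cast
      rw [← hpq (d : G), sub_zero]
    simpa [map_zero] using step

lemma nonneg_on_closure {G M : Type*} [AddCommGroup G] [AddCommMonoid M] [PartialOrder M] [IsOrderedAddMonoid M] (f : G →+ M)
    (s : Set G) (h : ∀ x ∈ s, 0 ≤ f x) : ∀ x ∈ AddSubmonoid.closure s, 0 ≤ f x := by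
  intro x hx
  induction hx using AddSubmonoid.closure_induction with
  | mem y hy => exact h y hy
  | zero => simp
  | add y z _ _ hy hz => rw [map_add]; exact add_nonneg hy hz

lemma exists_int_hom (L : Type*) [AddCommGroup L] [Module.Free ℤ L] [Module.Finite ℤ L]
    (f : L →+ ℚ) :
    ∃ N : ℕ, 1 ≤ N ∧ ∃ g : L →+ ℤ, ∀ x : L, (g x : ℚ) = (N : ℚ) * f x := by
  classical
  set b := Module.Free.chooseBasis ℤ L with hb
  set ι := Module.Free.ChooseBasisIndex ℤ L
  set N : ℕ := ∏ i : ι, (f (b i)).den with hN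
  have hN1 : 1 ≤ N := Nat.one_le_iff_ne_zero.mpr (by
    simp only [hN, Finset.prod_ne_zero_iff]
    exact fun i _ => (f (b i)).den_nz)
  have hdvd : ∀ i : ι, ((f (b i)).den : ℤ) ∣ (N : ℤ) := fun i => by
    exact_mod_cast Int.natCast_dvd_natCast.mpr (Finset.dvd_prod_of_mem _ (Finset.mem_univ i))
  set d : ι → ℤ := fun i => ((N : ℤ) / ((f (b i)).den : ℤ)) * (f (b i)).num with hd
  have hdcast : ∀ i : ι, (d i : ℚ) = (N : ℚ) * f (b i) := by
    intro i
    obtain ⟨k, hk⟩ := hdvd i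
    have hden : ((f (b i)).den : ℤ) ≠ 0 := by exact_mod_cast (f (b i)).den_nz
    have : d i = k * (f (b i)).num := by
      rw [hd]; simp only []
      rw [hk, Int.mul_ediv_cancel_left _ hden]
    rw [this]
    clear this
    have hkq : (N : ℚ) = ((f (b i)).den : ℚ) * (k : ℚ) := by exact_mod_cast congrArg (Int.cast : ℤ → ℚ) hk
    have hm : ((f (b i)).den : ℚ) * f (b i) = ((f (b i)).num : ℚ) := by
      rw [mul_comm]; exact Rat.mul_den_eq_num _
    push_cast
    rw [hkq, mul_comm (((f (b i)).den : ℚ)) ((k : ℚ)), mul_assoc, hm]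
  refine ⟨N, hN1, AddMonoidHom.mk' (fun x => ∑ i : ι, b.repr x i * d i) ?_, ?_⟩
  · intro x y
    simp only [map_add, Finsupp.add_apply, add_mul, Finset.sum_add_distrib]
  · intro x
    simp only [AddMonoidHom.mk'_apply]
    push_cast
    conv_rhs => rw [← b.sum_repr x]
    rw [map_sum]
    rw [Finset.mul_sum]
    apply Finset.sum_congr rfl
    intro i _
    rw [map_zsmul, hdcast i]
    rw [zsmul_eq_mul]
    ring

/-- If every `ℚ`-valued additive functional which is nonnegative on the saturated finitely
generated submonoid `P` is nonnegative on `a`, then `a ∈ P`. -/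
lemma mem_of_forall_rat_dual_nonneg {L : Type*} [AddCommGroup L] [Module.Free ℤ L]
    [Module.Finite ℤ L] (P : AddSubmonoid L) (S : Finset L)
    (hS : AddSubmonoid.closure (S : Set L) = P)
    (hsat : ∀ a : L, ∀ n : ℕ, 1 ≤ n → n • a ∈ P → a ∈ P)
    (a : L) (ha : ∀ f : L →+ ℚ, (∀ x ∈ P, 0 ≤ f x) → 0 ≤ f a) : a ∈ P := by
  classical
  set b := Module.Free.chooseBasis ℤ L with hb
  set ι := Module.Free.ChooseBasisIndex ℤ L
  set eQ : L →+ (ι → ℚ) := AddMonoidHom.mk' (fun x i => ((b.repr x i : ℤ) : ℚ)) (by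
    intro x y
    funext i
    simp [map_add]) with heQ
  have heQapp : ∀ (x : L) (i : ι), eQ x i = ((b.repr x i : ℤ) : ℚ) := fun x i => rfl
  have hinj : Function.Injective eQ := by
    intro x y hxy
    apply b.repr.injective
    ext i
    have h1 := congrFun hxy i
    rw [heQapp, heQapp] at h1
    exact_mod_cast h1
  set ls : List L := S.toList with hls0
  have hlsS : {x : L | x ∈ ls} = (S : Set L) := by ext x; simp [hls0, Finset.mem_toList]
  have hlsP : AddSubmonoid.closure {x : L | x ∈ ls} = P := by rw [hlsS]; exact hS
  rcases farkas (ls.map eQ) (eQ a) with h | ⟨f, hf, hfa⟩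
  · obtain ⟨n, hn, hmem⟩ := inCone_clear eQ hinj ls a h
    exact hsat a n hn (hlsP ▸ hmem)
  · exfalso
    set fL : L →+ ℚ := f.toAddMonoidHom.comp eQ with hfL
    have h1 : ∀ x ∈ P, 0 ≤ fL x := by
      rw [← hlsP]
      exact nonneg_on_closure fL _ (fun x hx => hf (eQ x) (List.mem_map_of_mem hx))
    have h2 := ha fL h1
    have h3 : fL a = f (eQ a) := rfl
    rw [h3] at h2
    linarith

end Aux

/-- The evaluation homomorphism `e : P → Hom(Hom(P, ℕ), ℕ)`,
`e p φ = φ p`, for a commutative additive monoid `P`. -/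
def evalHom (P : Type*) [AddCommMonoid P] : P →+ ((P →+ ℕ) →+ ℕ) where
  toFun p :=
    { toFun := fun φ => φ p
      map_zero' := rfl
      map_add' := fun φ ψ => rfl }
  map_zero' := by ext φ; exact φ.map_zero
  map_add' := fun p q => by ext φ; exact φ.map_add p q

/-- Let `L` be a finitely generated free additive abelian group and `P` a
finitely generated submonoid of `L` which generates `L` as a group, is sharp,
and is saturated in `L`.  Then the evaluation map
`e : P → Hom(Hom(P, ℕ), ℕ)` is a bijective monoid homomorphism. -/
theorem evalHom_bijective
    (L : Type*) [AddCommGroup L] [Module.Free ℤ L] [Module.Finite ℤ L]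
    (P : AddSubmonoid L) (hfg : P.FG)
    (hgen : ∀ g : L, ∃ p ∈ P, ∃ q ∈ P, g = p - q)
    (hsharp : ∀ p ∈ P, -p ∈ P → p = 0)
    (hsat : ∀ a : L, ∀ n : ℕ, 1 ≤ n → n • a ∈ P → a ∈ P) :
    Function.Bijective (evalHom P) := by
  classical
  obtain ⟨S, hS⟩ := hfg
  have keyK : ∀ a : L, (∀ f : L →+ ℚ, (∀ x ∈ P, 0 ≤ f x) → 0 ≤ f a) → a ∈ P :=
    fun a ha => mem_of_forall_rat_dual_nonneg P S hS hsat a ha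
  have scale : ∀ f : L →+ ℚ, (∀ x ∈ P, 0 ≤ f x) →
      ∃ N : ℕ, 1 ≤ N ∧ ∃ g : L →+ ℤ, (∀ x ∈ P, 0 ≤ g x) ∧ ∀ x : L, (g x : ℚ) = (N : ℚ) * f x := by
    intro f hf
    obtain ⟨N, hN, g, hg⟩ := exists_int_hom L f
    refine ⟨N, hN, g, ?_, hg⟩
    intro x hx
    have : (0:ℚ) ≤ (g x : ℚ) := by
      rw [hg]
      exact mul_nonneg (by positivity) (hf x hx)
    exact_mod_cast this
  -- the dual monoid inside L →+ ℤ
  set D : AddSubmonoid (L →+ ℤ) :=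
    { carrier := {f : L →+ ℤ | ∀ x ∈ P, 0 ≤ f x}
      zero_mem' := by intro x _; simp
      add_mem' := by
        intro f g hf hg x hx
        simp only [AddMonoidHom.add_apply]
        exact add_nonneg (hf x hx) (hg x hx) } with hD
  have memD : ∀ f : D, ∀ x ∈ P, 0 ≤ (f : L →+ ℤ) x := fun f => f.2
  -- restriction D → (P →+ ℕ)
  set r : D → (P →+ ℕ) := fun f =>
    { toFun := fun p => ((f : L →+ ℤ) (p : L)).toNat
      map_zero' := by simp
      map_add' := by
        intro p q
        have h1 : ((f : L →+ ℤ) ((p + q : P) : L)) = (f : L →+ ℤ) (p : L) + (f : L →+ ℤ) (q : L) := by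
          rw [AddSubmonoid.coe_add, map_add]
        show ((f : L →+ ℤ) ((p + q : P) : L)).toNat
            = ((f : L →+ ℤ) (p : L)).toNat + ((f : L →+ ℤ) (q : L)).toNat
        rw [h1]
        exact Int.toNat_add (memD f _ p.2) (memD f _ q.2) } with hr
  have hrapp : ∀ (f : D) (p : P), r f p = ((f : L →+ ℤ) (p : L)).toNat := fun f p => rfl
  have hrcast : ∀ (f : D) (p : P), ((r f p : ℕ) : ℤ) = (f : L →+ ℤ) (p : L) :=
    fun f p => Int.toNat_of_nonneg (memD f _ p.2)
  -- extension of ℕ-valued homs on P to ℤ-valued homs on L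
  have ext_hom : ∀ φ : P →+ ℕ, ∃ f : D, r f = φ := by
    intro φ
    obtain ⟨f, hf⟩ := exists_extension P hgen ((Nat.castAddMonoidHom ℤ).comp φ)
    have hf' : ∀ p : P, f (p : L) = ((φ p : ℕ) : ℤ) := fun p => hf p
    have hfD : f ∈ D := by
      intro x hx
      rw [hf' ⟨x, hx⟩]
      exact Int.natCast_nonneg _
    refine ⟨⟨f, hfD⟩, ?_⟩
    ext p
    rw [hrapp, hf' p]
    simp
  constructor
  · -- injectivity
    intro x y hxy
    have hφ : ∀ φ : P →+ ℕ, φ x = φ y := fun φ => DFunLike.congr_fun hxy φ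
    have hker : ∀ f : L →+ ℚ, (∀ z ∈ P, 0 ≤ f z) → f (x : L) = f (y : L) := by
      intro f hf
      obtain ⟨N, hN, g, hgP, hg⟩ := scale f hf
      have hgD : g ∈ D := hgP
      have hgxy : g (x : L) = g (y : L) := by
        rw [← hrcast ⟨g, hgD⟩ x, ← hrcast ⟨g, hgD⟩ y, hφ (r ⟨g, hgD⟩)]
      have hcast := congrArg (Int.cast : ℤ → ℚ) hgxy
      rw [hg, hg] at hcast
      have hNQ : ((N : ℚ)) ≠ 0 := by positivity
      exact mul_left_cancel₀ hNQ hcast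
    have h1 : ((x : L) - (y : L)) ∈ P := by
      apply keyK
      intro f hf
      rw [map_sub, hker f hf, sub_self]
    have h2 : -((x : L) - (y : L)) ∈ P := by
      rw [neg_sub]
      apply keyK
      intro f hf
      rw [map_sub, hker f hf, sub_self]
    have h3 := hsharp _ h1 h2
    exact Subtype.ext (sub_eq_zero.mp h3)
  · -- surjectivity
    intro Φ
    -- support functionals
    have hsupp : ∀ s : L, s ∈ P → s ≠ 0 → ∃ h : L →+ ℤ, (∀ x ∈ P, 0 ≤ h x) ∧ 1 ≤ h s := by
      intro s hsP hs0
      by_contra hcon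
      push_neg at hcon
      have hneg : ∀ f : L →+ ℚ, (∀ x ∈ P, 0 ≤ f x) → 0 ≤ f (-s) := by
        intro f hf
        obtain ⟨N, hN, g, hgP, hg⟩ := scale f hf
        have h1 : g s < 1 := hcon g hgP
        have h2 : 0 ≤ g s := hgP s hsP
        have h3 : g s = 0 := by omega
        have h4 : (N : ℚ) * f s = 0 := by
          rw [← hg]
          exact_mod_cast congrArg (Int.cast : ℤ → ℚ) h3
        have hNQ : ((N : ℚ)) ≠ 0 := by positivity
        have hfs : f s = 0 := by
          rcases mul_eq_zero.mp h4 with h | h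
          · exact absurd h hNQ
          · exact h
        rw [map_neg, hfs, neg_zero]
      exact hs0 (hsharp s hsP (keyK (-s) hneg))
    -- a global support functional, positive on the nonzero generators
    have hchoice : ∀ s : L, s ∈ S → ∃ h : L →+ ℤ, (∀ x ∈ P, 0 ≤ h x) ∧ (s ≠ 0 → 1 ≤ h s) := by
      intro s hsS
      by_cases h0 : s = 0
      · exact ⟨0, by intro x _; simp, fun h => absurd h0 h⟩
      · obtain ⟨h, h1, h2⟩ := hsupp s (hS ▸ AddSubmonoid.subset_closure hsS) h0
        exact ⟨h, h1, fun _ => h2⟩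
    choose F hF1 hF2 using hchoice
    have hSP : ∀ s ∈ S, s ∈ P := fun s hsS => hS ▸ AddSubmonoid.subset_closure hsS
    set h0 : L →+ ℤ := ∑ s ∈ S.attach, F s.1 s.2 with hh0
    have hh0app : ∀ x : L, h0 x = ∑ s ∈ S.attach, F s.1 s.2 x := by
      intro x
      rw [hh0, AddMonoidHom.finset_sum_apply]
    have hh0P : ∀ x ∈ P, 0 ≤ h0 x := by
      intro x hx
      rw [hh0app]
      exact Finset.sum_nonneg (fun s _ => hF1 s.1 s.2 x hx)
    have hh0S : ∀ s : L, s ∈ S → s ≠ 0 → 1 ≤ h0 s := by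
      intro s hsS hs0
      rw [hh0app]
      calc (1:ℤ) ≤ F s hsS s := hF2 s hsS hs0
        _ ≤ ∑ t ∈ S.attach, F t.1 t.2 s :=
          Finset.single_le_sum (f := fun t : {x // x ∈ S} => F t.1 t.2 s)
            (fun t _ => hF1 t.1 t.2 s (hSP s hsS)) (Finset.mem_attach S ⟨s, hsS⟩)
    -- D generates L →+ ℤ as a group
    have hDgen : ∀ g : L →+ ℤ, ∃ u ∈ D, ∃ w ∈ D, g = u - w := by
      intro g
      set N : ℕ := S.sup (fun s => (g s).toNat) with hNdef
      have hNle : ∀ s ∈ S, g s ≤ (N : ℤ) := by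
        intro s hsS
        calc g s ≤ ((g s).toNat : ℤ) := Int.self_le_toNat _
          _ ≤ (N : ℤ) := by
            exact_mod_cast Finset.le_sup (f := fun s => (g s).toNat) hsS
      set u : L →+ ℤ := AddMonoidHom.mk' (fun x => (N : ℤ) * h0 x) (by
        intro x y
        show (N : ℤ) * h0 (x + y) = (N : ℤ) * h0 x + (N : ℤ) * h0 y
        rw [map_add]
        ring) with hu
      have huapp : ∀ x : L, u x = (N : ℤ) * h0 x := fun x => rfl
      have huP : ∀ x ∈ P, 0 ≤ u x := by
        intro x hx
        rw [huapp]
        exact mul_nonneg (by positivity) (hh0P x hx)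
      have hwP : ∀ x ∈ P, 0 ≤ (u - g) x := by
        rw [← hS]
        apply nonneg_on_closure
        intro s hsS
        simp only [AddMonoidHom.sub_apply]
        by_cases h0s : s = 0
        · simp [h0s]
        · have e1 : 1 ≤ h0 s := hh0S s hsS h0s
          have e2 : g s ≤ (N : ℤ) := hNle s hsS
          have e3 : (N : ℤ) ≤ (N : ℤ) * h0 s := le_mul_of_one_le_right (by positivity) e1
          rw [huapp]
          omega
      exact ⟨u, huP, u - g, hwP, by ext z; simp⟩
    -- the homomorphism D →+ ℤ induced by Φ
    have hradd : ∀ f g : D, r (f + g) = r f + r g := by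
      intro f g
      ext p
      have hco : ((f + g : D) : L →+ ℤ) (p : L) = (f : L →+ ℤ) (p : L) + (g : L →+ ℤ) (p : L) := rfl
      rw [AddMonoidHom.add_apply, hrapp, hrapp, hrapp, hco]
      exact Int.toNat_add (memD f _ p.2) (memD g _ p.2)
    have hrzero : r 0 = 0 := by
      ext p
      rw [hrapp]
      have : ((0 : D) : L →+ ℤ) (p : L) = 0 := rfl
      rw [this]
      rfl
    set ψ : D →+ ℤ :=
      { toFun := fun f => ((Φ (r f) : ℕ) : ℤ)
        map_zero' := by
          show ((Φ (r 0) : ℕ) : ℤ) = 0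
          rw [hrzero, map_zero]
          rfl
        map_add' := by
          intro f g
          show ((Φ (r (f + g)) : ℕ) : ℤ) = ((Φ (r f) : ℕ) : ℤ) + ((Φ (r g) : ℕ) : ℤ)
          rw [hradd, map_add]
          push_cast
          ring } with hψ
    have hψapp : ∀ f : D, ψ f = ((Φ (r f) : ℕ) : ℤ) := fun f => rfl
    obtain ⟨Ψ, hΨ⟩ := exists_extension D hDgen ψ
    -- biduality for the ambient lattice
    set Ψ' : Module.Dual ℤ (Module.Dual ℤ L) :=
      (Ψ.comp (LinearMap.toAddMonoidHom' : (Module.Dual ℤ L) →+ (L →+ ℤ))).toIntLinearMap with hΨ'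
    set a : L := (Module.evalEquiv ℤ L).symm Ψ' with ha
    have hEval : ∀ g : L →+ ℤ, g a = Ψ g := by
      intro g
      have h1 := Module.apply_evalEquiv_symm_apply ℤ L g.toIntLinearMap Ψ'
      have h2 : g.toIntLinearMap ((Module.evalEquiv ℤ L).symm Ψ') = g a := rfl
      have h3 : Ψ' g.toIntLinearMap = Ψ g := rfl
      rw [h2, h3] at h1
      exact h1
    have haP : a ∈ P := by
      apply keyK
      intro f hf
      obtain ⟨N, hN, g, hgP, hg⟩ := scale f hf
      have hgD : g ∈ D := hgP
      have h1 : g a = ψ ⟨g, hgD⟩ := by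
        rw [← hΨ ⟨g, hgD⟩]
        exact hEval g
      have h2 : (0:ℤ) ≤ g a := by
        rw [h1, hψapp]
        exact Int.natCast_nonneg _
      have h3 : (0:ℚ) ≤ (N : ℚ) * f a := by
        rw [← hg]
        exact_mod_cast h2
      have hNQ : (0:ℚ) < (N : ℚ) := by positivity
      nlinarith
    refine ⟨⟨a, haP⟩, ?_⟩
    ext φ
    show φ ⟨a, haP⟩ = Φ φ
    obtain ⟨f, hrf⟩ := ext_hom φ
    have h1 : φ ⟨a, haP⟩ = ((f : L →+ ℤ) a).toNat := by
      rw [← hrf]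
      exact hrapp f ⟨a, haP⟩
    have h2 : (f : L →+ ℤ) a = ((Φ φ : ℕ) : ℤ) := by
      rw [hEval (f : L →+ ℤ), hΨ f, hψapp, hrf]
    rw [h1, h2]
    exact Int.toNat_natCast _
end
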